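/- arXiv:1908.05921 — 2 statements merged into one kernel-verified Lean document; each statement's English description precedes it below -/
import Mathlib

section
/- If A and B are distinct submodules of M both of degree 1 in the proper sum-essential graph N(M) and A ∩ B = 0, then A and B are non-isomorphic simple modules. -/
variable {R : Type*} [Ring R] {M : Type*} [AddCommGroup M] [Module R M]

/-- `N` is an essential submodule of `M`: it intersects every nonzero submodule nontrivially. -/
def IsEssentialSubmodule (N : Submodule R M) : Prop :=
  ∀ B : Submodule R M, B ≠ ⊥ → N ⊓ B ≠ ⊥

/-- A vertex of the sum-essential graph `S(M)`: a nontrivial submodule. -/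
def IsVertexS (N : Submodule R M) : Prop := N ≠ ⊥ ∧ N ≠ ⊤

/-- Adjacency in the sum-essential graph `S(M)`. -/
def AdjS (A B : Submodule R M) : Prop :=
  IsVertexS A ∧ IsVertexS B ∧ A ≠ B ∧ IsEssentialSubmodule (A ⊔ B)

/-- A vertex of the proper sum-essential graph `N(M)`: a nontrivial non-essential submodule. -/
def IsVertexP (N : Submodule R M) : Prop :=
  N ≠ ⊥ ∧ N ≠ ⊤ ∧ ¬ IsEssentialSubmodule N

/-- Adjacency in the proper sum-essential graph `N(M)`. -/
def AdjP (A B : Submodule R M) : Prop :=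
  IsVertexP A ∧ IsVertexP B ∧ A ≠ B ∧ IsEssentialSubmodule (A ⊔ B)

/-- `U` is a uniform submodule: nonzero, and any two nonzero submodules of it intersect. -/
def UniformSubmodule (U : Submodule R M) : Prop :=
  U ≠ ⊥ ∧ ∀ A B : Submodule R M, A ≤ U → B ≤ U → A ≠ ⊥ → B ≠ ⊥ → A ⊓ B ≠ ⊥

/-- `C` is a complement of `U` in `M`: maximal with respect to `U ⊓ C = ⊥`. -/
def IsComplementOf (C U : Submodule R M) : Prop :=
  U ⊓ C = ⊥ ∧ ∀ D : Submodule R M, U ⊓ D = ⊥ → C ≤ D → D = C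

lemma essential_mono {N N' : Submodule R M} (h : IsEssentialSubmodule N) (hle : N ≤ N') :
    IsEssentialSubmodule N' := by
  intro B hB hcon
  exact h B hB (eq_bot_iff.mpr ((inf_le_inf_right B hle).trans hcon.le))

lemma exists_compl_above (K W : Submodule R M) (h : K ⊓ W = ⊥) :
    ∃ Z, W ≤ Z ∧ IsComplementOf Z K := by
  have hchain : ∀ c ⊆ {D : Submodule R M | K ⊓ D = ⊥}, IsChain (· ≤ ·) c → ∀ y ∈ c,
      ∃ ub ∈ {D : Submodule R M | K ⊓ D = ⊥}, ∀ z ∈ c, z ≤ ub := by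
    intro c hcs hc y hy
    refine ⟨sSup c, ?_, fun z hz => le_sSup hz⟩
    rw [Set.mem_setOf_eq, eq_bot_iff]
    rintro x hx
    have hxK : x ∈ K := hx.1
    have hxs : x ∈ sSup c := hx.2
    obtain ⟨N, hNc, hxN⟩ :=
      (Submodule.mem_sSup_of_directed ⟨y, hy⟩ hc.directedOn).mp hxs
    have hmem : x ∈ K ⊓ N := Submodule.mem_inf.mpr ⟨hxK, hxN⟩
    rw [hcs hNc] at hmem
    exact hmem
  obtain ⟨Z, hWZ, hZs, hmax⟩ :=
    zorn_le_nonempty₀ {D : Submodule R M | K ⊓ D = ⊥} hchain W h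
  exact ⟨Z, hWZ, hZs, fun D hD hZD => le_antisymm (hmax hD hZD) hZD⟩

lemma compl_sup_essential {K Z : Submodule R M} (h : IsComplementOf Z K) :
    IsEssentialSubmodule (K ⊔ Z) := by
  intro W hW hcon
  have hdisj : K ⊓ (Z ⊔ W) = ⊥ := by
    rw [eq_bot_iff]
    rintro x ⟨hxK, hxZW⟩
    obtain ⟨z, hz, w, hw, hx⟩ := Submodule.mem_sup.mp hxZW
    have hwmem : w ∈ (K ⊔ Z) ⊓ W := by
      refine ⟨?_, hw⟩
      have : w = x - z := by rw [← hx]; abel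
      rw [this]
      exact sub_mem (Submodule.mem_sup_left hxK) (Submodule.mem_sup_right hz)
    rw [hcon] at hwmem
    have hw0 : w = 0 := hwmem
    have hxeq : x = z := by rw [← hx, hw0, add_zero]
    have hxz : x ∈ K ⊓ Z := Submodule.mem_inf.mpr ⟨hxK, hxeq ▸ hz⟩
    rw [h.1] at hxz
    exact hxz
  have := h.2 (Z ⊔ W) hdisj le_sup_left
  have hWZ : W ≤ Z := le_sup_right.trans this.le
  have : W ≤ ⊥ := by
    rw [← hcon]
    exact le_inf (hWZ.trans le_sup_right) le_rfl
  exact hW (le_bot_iff.mp this)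

/-- Everything disjoint from a nonzero submodule of `A` lies in the unique neighbour `C`
of `A`, and every nonzero submodule of `A` is disjoint from `C`. -/
lemma key_neighbor {A C : Submodule R M} (hC : AdjP A C) (hCu : ∀ y, AdjP A y → y = C)
    (X D : Submodule R M) (hX : X ≠ ⊥) (hXA : X ≤ A) (hXD : X ⊓ D = ⊥) :
    D ≤ C ∧ X ⊓ C = ⊥ := by
  obtain ⟨Z, hDZ, hZc⟩ := exists_compl_above X D hXD
  have hAne : A ≠ ⊥ := hC.1.1
  have hZne : Z ≠ ⊥ := by
    intro hZ0
    have hness : ¬ IsEssentialSubmodule A := hC.1.2.2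
    rw [IsEssentialSubmodule] at hness
    push_neg at hness
    obtain ⟨W, hW, hWA⟩ := hness
    have hXW : X ⊓ W = ⊥ := eq_bot_iff.mpr ((inf_le_inf_right W hXA).trans hWA.le)
    have := hZc.2 W hXW (hZ0 ▸ bot_le)
    exact hW (this.symm ▸ hZ0 ▸ rfl)
  have hZtop : Z ≠ ⊤ := by
    intro h
    have h1 := hZc.1
    rw [h, inf_top_eq] at h1
    exact hX h1
  have hZness : ¬ IsEssentialSubmodule Z := by
    intro hess
    exact hess X hX (by rw [inf_comm]; exact hZc.1)
  have hAZ : A ≠ Z := by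
    intro h
    apply hX
    rw [eq_bot_iff, ← hZc.1]
    exact le_inf le_rfl (h ▸ hXA)
  have hess : IsEssentialSubmodule (A ⊔ Z) :=
    essential_mono (compl_sup_essential hZc) (sup_le_sup_right hXA Z)
  have hZC : Z = C := hCu Z ⟨hC.1, ⟨hZne, hZtop, hZness⟩, hAZ, hess⟩
  exact ⟨hDZ.trans hZC.le, hZC ▸ hZc.1⟩

lemma atom_aux (A B : Submodule R M)
    (hA : ∃! C, AdjP A C) (hB : ∃! C, AdjP B C) (hdisj : A ⊓ B = ⊥) :
    IsAtom A := by
  obtain ⟨C, hC, hCu⟩ := hA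
  obtain ⟨C', hC', hCu'⟩ := hB
  have hAv : IsVertexP A := hC.1
  have hBv : IsVertexP B := hC'.1
  have hAne : A ≠ ⊥ := hAv.1
  have hBne : B ≠ ⊥ := hBv.1
  have hBA : B ⊓ A = ⊥ := by rw [inf_comm]; exact hdisj
  have hAC' : A ≤ C' := (key_neighbor hC' hCu' B A hBne le_rfl hBA).1
  have hAC : A ⊓ C = ⊥ := (key_neighbor hC hCu A ⊥ hAne le_rfl (inf_bot_eq A)).2
  constructor
  · exact hAne
  intro X hXA
  by_contra hX0
  have hXB : X ⊓ B = ⊥ := eq_bot_iff.mpr ((inf_le_inf_right B hXA.le).trans hdisj.le)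
  have hXtop : X ≠ ⊤ := fun h => hAv.2.1 (top_le_iff.mp (h ▸ hXA.le))
  have hXness : ¬ IsEssentialSubmodule X := fun hess => hess B hBne hXB
  have hXvert : IsVertexP X := ⟨hX0, hXtop, hXness⟩
  have hBX : B ≠ X := fun h => hX0 (by rw [← hXB, h, inf_idem])
  by_cases hcase : IsEssentialSubmodule (B ⊔ X)
  · have hXC' : X = C' := hCu' X ⟨hBv, hXvert, hBX, hcase⟩
    exact hXA.not_ge (hXC' ▸ hAC')
  · rw [IsEssentialSubmodule] at hcase
    push_neg at hcase
    obtain ⟨W, hWne, hWd⟩ := hcase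
    obtain ⟨Z, hWZ, hZc⟩ := exists_compl_above (B ⊔ X) W hWd
    have hZne : Z ≠ ⊥ := fun h => hWne (le_bot_iff.mp (h ▸ hWZ))
    -- B ⊓ (X ⊔ Z) = ⊥
    have hBD : B ⊓ (X ⊔ Z) = ⊥ := by
      rw [eq_bot_iff]
      rintro b hb
      have hbB : b ∈ B := hb.1
      obtain ⟨x, hx, z, hz, hbe⟩ := Submodule.mem_sup.mp hb.2
      have hzval : z = b - x := by rw [← hbe]; abel
      have hzmem : z ∈ (B ⊔ X) ⊓ Z := Submodule.mem_inf.mpr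
        ⟨hzval ▸ sub_mem (Submodule.mem_sup_left hbB) (Submodule.mem_sup_right hx), hz⟩
      rw [hZc.1] at hzmem
      have hz0 : z = 0 := hzmem
      have hbx : b = x := by rw [← hbe, hz0, add_zero]
      have : b ∈ X ⊓ B := Submodule.mem_inf.mpr ⟨hbx ▸ hx, hbB⟩
      rw [hXB] at this
      exact this
    have hDne : X ⊔ Z ≠ ⊥ := fun h => hZne (le_bot_iff.mp (h ▸ (le_sup_right : Z ≤ X ⊔ Z)))
    have hDtop : X ⊔ Z ≠ ⊤ := by
      intro h
      rw [h, inf_top_eq] at hBD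
      exact hBne hBD
    have hDness : ¬ IsEssentialSubmodule (X ⊔ Z) := fun hess =>
      hess B hBne (by rw [inf_comm]; exact hBD)
    have hBD' : B ≠ X ⊔ Z := fun h => hBne (by rw [← hBD, ← h, inf_idem])
    have hesssup : IsEssentialSubmodule (B ⊔ (X ⊔ Z)) := by
      have heq : B ⊔ (X ⊔ Z) = (B ⊔ X) ⊔ Z := by rw [sup_assoc]
      rw [heq]
      exact compl_sup_essential hZc
    have hDC' : X ⊔ Z = C' := hCu' _ ⟨hBv, ⟨hDne, hDtop, hDness⟩, hBD', hesssup⟩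
    -- Z ≤ C, hence Z ⊓ A = ⊥
    have hXZ : X ⊓ Z = ⊥ := eq_bot_iff.mpr
      ((inf_le_inf_right Z (le_sup_right : X ≤ B ⊔ X)).trans hZc.1.le)
    have hZC : Z ≤ C := (key_neighbor hC hCu X Z hX0 hXA.le hXZ).1
    have hZA : Z ⊓ A = ⊥ := eq_bot_iff.mpr (le_trans (inf_le_inf_right A hZC)
      (by rw [inf_comm]; exact hAC.le))
    -- modular law
    have hAle : A ≤ X ⊔ Z := hDC' ▸ hAC'
    have : A = X := by
      have h1 : (X ⊔ Z) ⊓ A = A := inf_eq_right.mpr hAle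
      have h2 : (X ⊔ Z) ⊓ A = X ⊔ (Z ⊓ A) := sup_inf_assoc_of_le Z hXA.le
      rw [hZA, sup_bot_eq] at h2
      rw [← h1, h2]
    exact hXA.ne' this

/-- If `A ≠ B` both have degree 1 in `N(M)` and `A ∩ B = 0`, then
`A` and `B` are non-isomorphic simple modules. -/
theorem stmt14 (A B : Submodule R M) (hAB : A ≠ B)
    (hA : ∃! C, AdjP A C) (hB : ∃! C, AdjP B C) (hdisj : A ⊓ B = ⊥) :
    IsAtom A ∧ IsAtom B ∧ IsEmpty (↥A ≃ₗ[R] ↥B) := by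
  refine ⟨atom_aux A B hA hB hdisj, atom_aux B A hB hA (by rw [inf_comm]; exact hdisj), ?_⟩
  constructor
  intro f
  obtain ⟨C, hC, hCu⟩ := hA
  obtain ⟨C', hC', _⟩ := hB
  have hAv : IsVertexP A := hC.1
  have hBv : IsVertexP B := hC'.1
  have hAne : A ≠ ⊥ := hAv.1
  have hBne : B ≠ ⊥ := hBv.1
  set g : ↥A →ₗ[R] M := A.subtype + B.subtype.comp (f : ↥A →ₗ[R] ↥B) with hgdef
  have hg : ∀ a : ↥A, g a = (a : M) + ((f a : ↥B) : M) := fun a => rfl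
  set Δ : Submodule R M := LinearMap.range g with hΔdef
  have hmemΔ : ∀ x : M, x ∈ Δ → ∃ a : ↥A, (a : M) + ((f a : ↥B) : M) = x := by
    intro x hx
    obtain ⟨a, ha⟩ := LinearMap.mem_range.mp hx
    exact ⟨a, by rw [← hg a]; exact ha⟩
  -- A ⊓ Δ = ⊥
  have hΔA : A ⊓ Δ = ⊥ := by
    rw [eq_bot_iff]
    rintro x hx
    obtain ⟨a, ha⟩ := hmemΔ x hx.2
    have hfa : ((f a : ↥B) : M) = x - (a : M) := by rw [← ha]; abel
    have hABmem : ((f a : ↥B) : M) ∈ A ⊓ B :=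
      Submodule.mem_inf.mpr ⟨hfa ▸ sub_mem hx.1 a.2, (f a).2⟩
    rw [hdisj] at hABmem
    have hfa0 : f a = 0 := Subtype.ext hABmem
    have ha0 : a = 0 := by
      have := f.map_eq_zero_iff.mp hfa0
      exact this
    have : x = 0 := by
      rw [← ha, ha0, map_zero]
      simp
    simp [this]
  -- B ⊓ Δ = ⊥
  have hΔB : B ⊓ Δ = ⊥ := by
    rw [eq_bot_iff]
    rintro x hx
    obtain ⟨a, ha⟩ := hmemΔ x hx.2
    have haval : (a : M) = x - ((f a : ↥B) : M) := by rw [← ha]; abel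
    have hABmem : (a : M) ∈ A ⊓ B :=
      Submodule.mem_inf.mpr ⟨a.2, haval ▸ sub_mem hx.1 (f a).2⟩
    rw [hdisj] at hABmem
    have ha0 : a = 0 := Subtype.ext hABmem
    have : x = 0 := by rw [← ha, ha0, map_zero]; simp
    simp [this]
  -- Δ ≠ ⊥
  have hΔne : Δ ≠ ⊥ := by
    intro h
    obtain ⟨a0, ha0A, ha0ne⟩ := Submodule.ne_bot_iff A |>.mp hAne
    have hmem : g ⟨a0, ha0A⟩ ∈ Δ := LinearMap.mem_range_self g _
    rw [h, Submodule.mem_bot] at hmem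
    rw [hg] at hmem
    have hmemAB : a0 ∈ A ⊓ B := by
      refine Submodule.mem_inf.mpr ⟨ha0A, ?_⟩
      have hval : a0 = -((f ⟨a0, ha0A⟩ : ↥B) : M) := by
        linear_combination (norm := abel) hmem
      rw [hval]
      exact neg_mem (f _).2
    rw [hdisj] at hmemAB
    exact ha0ne hmemAB
  -- A ⊔ Δ = A ⊔ B
  have hsup : A ⊔ Δ = A ⊔ B := by
    apply le_antisymm
    · refine sup_le le_sup_left ?_
      rintro x hx
      obtain ⟨a, ha⟩ := hmemΔ x hx
      rw [← ha]
      exact add_mem (Submodule.mem_sup_left a.2) (Submodule.mem_sup_right (f a).2)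
    · refine sup_le le_sup_left ?_
      intro b hb
      set a : ↥A := f.symm ⟨b, hb⟩ with hadef
      have hfa : ((f a : ↥B) : M) = b := by rw [hadef, f.apply_symm_apply]
      have : b = g a - (a : M) := by rw [hg, hfa]; abel
      rw [this]
      exact sub_mem (Submodule.mem_sup_right (LinearMap.mem_range_self g a))
        (Submodule.mem_sup_left a.2)
  by_cases hcase : IsEssentialSubmodule (A ⊔ B)
  · have hBisC : B = C := hCu B ⟨hAv, hBv, hAB, hcase⟩
    have hΔtop : Δ ≠ ⊤ := by
      intro h
      rw [h, inf_top_eq] at hΔA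
      exact hAne hΔA
    have hΔness : ¬ IsEssentialSubmodule Δ := fun hess =>
      hess A hAne (by rw [inf_comm]; exact hΔA)
    have hAΔ : A ≠ Δ := fun h => hAne (by rw [← hΔA, ← h, inf_idem])
    have hΔisC : Δ = C := hCu Δ ⟨hAv, ⟨hΔne, hΔtop, hΔness⟩, hAΔ, by rw [hsup]; exact hcase⟩
    have hBΔ : B = Δ := hBisC.trans hΔisC.symm
    exact hBne (by rw [← hΔB, ← hBΔ, inf_idem])
  · rw [IsEssentialSubmodule] at hcase
    push_neg at hcase
    obtain ⟨W, hWne, hWd⟩ := hcase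
    obtain ⟨Z, hWZ, hZc⟩ := exists_compl_above (A ⊔ B) W hWd
    have hZne : Z ≠ ⊥ := fun h => hWne (le_bot_iff.mp (h ▸ hWZ))
    -- A ⊓ (B ⊔ Z) = ⊥
    have hBZA : A ⊓ (B ⊔ Z) = ⊥ := by
      rw [eq_bot_iff]
      rintro a ha
      obtain ⟨b, hb, z, hz, hae⟩ := Submodule.mem_sup.mp ha.2
      have hzval : z = a - b := by rw [← hae]; abel
      have hzmem : z ∈ (A ⊔ B) ⊓ Z := Submodule.mem_inf.mpr
        ⟨hzval ▸ sub_mem (Submodule.mem_sup_left ha.1) (Submodule.mem_sup_right hb), hz⟩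
      rw [hZc.1] at hzmem
      have hz0 : z = 0 := hzmem
      have hab : a = b := by rw [← hae, hz0, add_zero]
      have : a ∈ A ⊓ B := Submodule.mem_inf.mpr ⟨ha.1, hab ▸ hb⟩
      rw [hdisj] at this
      exact this
    -- A ⊓ (Δ ⊔ Z) = ⊥
    have hΔZA : A ⊓ (Δ ⊔ Z) = ⊥ := by
      rw [eq_bot_iff]
      rintro a ha
      obtain ⟨d, hd, z, hz, hae⟩ := Submodule.mem_sup.mp ha.2
      obtain ⟨x, hxd⟩ := hmemΔ d hd
      have hkey : a - (x : M) = ((f x : ↥B) : M) + z := by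
        rw [← hae, ← hxd]; abel
      have hmem1 : a - (x : M) ∈ A ⊓ (B ⊔ Z) := Submodule.mem_inf.mpr
        ⟨sub_mem ha.1 x.2,
         hkey ▸ add_mem (Submodule.mem_sup_left (f x).2) (Submodule.mem_sup_right hz)⟩
      rw [hBZA] at hmem1
      have hax : a = (x : M) := sub_eq_zero.mp hmem1
      have hfxz : ((f x : ↥B) : M) + z = 0 := by rw [← hkey, hax, sub_self]
      have hfxmem : ((f x : ↥B) : M) ∈ (A ⊔ B) ⊓ Z := by
        refine Submodule.mem_inf.mpr ⟨Submodule.mem_sup_right (f x).2, ?_⟩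
        have : ((f x : ↥B) : M) = -z := by linear_combination (norm := abel) hfxz
        rw [this]
        exact neg_mem hz
      rw [hZc.1] at hfxmem
      have hfx0 : f x = 0 := Subtype.ext hfxmem
      have hx0 : x = 0 := f.map_eq_zero_iff.mp hfx0
      have : a = 0 := by rw [hax, hx0]; rfl
      simp [this]
    -- both B ⊔ Z and Δ ⊔ Z are neighbours of A
    have mkAdj : ∀ D : Submodule R M, A ⊓ (D ⊔ Z) = ⊥ →
        IsEssentialSubmodule (A ⊔ (D ⊔ Z)) → AdjP A (D ⊔ Z) := by
      intro D hDZA hess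
      refine ⟨hAv, ⟨?_, ?_, ?_⟩, ?_, hess⟩
      · exact fun h => hZne (le_bot_iff.mp (h ▸ (le_sup_right : Z ≤ D ⊔ Z)))
      · intro h
        rw [h, inf_top_eq] at hDZA
        exact hAne hDZA
      · exact fun hessD => hessD A hAne (by rw [inf_comm]; exact hDZA)
      · exact fun h => hAne (by rw [← hDZA, ← h, inf_idem])
    have hessBZ : IsEssentialSubmodule (A ⊔ (B ⊔ Z)) := by
      rw [← sup_assoc]
      exact compl_sup_essential hZc
    have hessΔZ : IsEssentialSubmodule (A ⊔ (Δ ⊔ Z)) := by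
      rw [← sup_assoc, hsup, sup_assoc]
      exact hessBZ
    have hBZC : B ⊔ Z = C := hCu _ (mkAdj B hBZA hessBZ)
    have hΔZC : Δ ⊔ Z = C := hCu _ (mkAdj Δ hΔZA hessΔZ)
    -- derive contradiction: B = ⊥
    obtain ⟨b0, hb0B, hb0ne⟩ := Submodule.ne_bot_iff B |>.mp hBne
    have hb0mem : b0 ∈ Δ ⊔ Z := by
      rw [hΔZC, ← hBZC]
      exact Submodule.mem_sup_left hb0B
    obtain ⟨d, hd, z, hz, hbe⟩ := Submodule.mem_sup.mp hb0mem
    obtain ⟨x, hxd⟩ := hmemΔ d hd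
    have hxval : (x : M) = b0 - ((f x : ↥B) : M) - z := by rw [← hbe, ← hxd]; abel
    have hxmem : (x : M) ∈ A ⊓ (B ⊔ Z) := by
      refine Submodule.mem_inf.mpr ⟨x.2, ?_⟩
      rw [hxval]
      exact sub_mem (Submodule.mem_sup_left (sub_mem hb0B (f x).2))
        (Submodule.mem_sup_right hz)
    rw [hBZA] at hxmem
    have hx0 : x = 0 := Subtype.ext hxmem
    have hb0z : b0 = z := by
      rw [← hbe, ← hxd, hx0, map_zero]
      simp
    have : b0 ∈ (A ⊔ B) ⊓ Z := Submodule.mem_inf.mpr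
      ⟨Submodule.mem_sup_right hb0B, hb0z ▸ hz⟩
    rw [hZc.1] at this
    exact hb0ne this
end

section
/- Let M be a module whose sum-essential graph S(M) has at least 2 vertices. Then S(M) is triangle-free if and only if either M is a direct sum of two non-isomorphic simple modules, or M is a chain (uniserial) module with exactly two nontrivial submodules; in either case S(M) is the complete graph on two vertices. Consequently the girth of S(M) is 3 or ∞. -/
variable {R : Type*} [Ring R] {M : Type*} [AddCommGroup M] [Module R M]

/-- The sum-essential graph of `M` as a `SimpleGraph` on the nontrivial submodules. -/
def sumEssentialGraph (R M : Type*) [Ring R] [AddCommGroup M] [Module R M] :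
    SimpleGraph {N : Submodule R M // N ≠ ⊥ ∧ N ≠ ⊤} where
  Adj A B := A ≠ B ∧ IsEssentialSubmodule ((A : Submodule R M) ⊔ (B : Submodule R M))
  symm := by
    constructor
    rintro A B ⟨h1, h2⟩
    exact ⟨h1.symm, by rwa [sup_comm]⟩
  loopless := by
    constructor
    rintro A ⟨h1, -⟩
    exact h1 rfl

lemma st18_ess_top : IsEssentialSubmodule (⊤ : Submodule R M) := fun B hB => by rwa [top_inf_eq]

lemma st18_ess_of_le {A B : Submodule R M} (h : A ≤ B) (hA : IsEssentialSubmodule A) :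
    IsEssentialSubmodule B := fun X hX hbot => hA X hX (le_bot_iff.mp (hbot ▸ inf_le_inf_right X h))

lemma st18_inf_bot_eq {U C : Submodule R M} (h : U ⊓ C = ⊥) {x : M} (hU : x ∈ U) (hC : x ∈ C) :
    x = 0 := by
  have hx : x ∈ U ⊓ C := Submodule.mem_inf.mpr ⟨hU, hC⟩
  rw [h] at hx
  simpa using hx

lemma st18_exists_compl {U V : Submodule R M} (h : U ⊓ V = ⊥) :
    ∃ C : Submodule R M, V ≤ C ∧ U ⊓ C = ⊥ ∧ ∀ D : Submodule R M, U ⊓ D = ⊥ → C ≤ D → D = C := by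
  have hzorn : ∀ c ⊆ {W : Submodule R M | U ⊓ W = ⊥}, IsChain (· ≤ ·) c → ∀ y ∈ c,
      ∃ ub ∈ {W : Submodule R M | U ⊓ W = ⊥}, ∀ z ∈ c, z ≤ ub := by
    intro c hcs hchain y hy
    refine ⟨sSup c, ?_, fun z hz => le_sSup hz⟩
    rw [Set.mem_setOf_eq, eq_bot_iff]
    intro x hx
    obtain ⟨hxU, hxs⟩ := Submodule.mem_inf.mp hx
    rw [Submodule.mem_sSup_of_directed ⟨y, hy⟩ hchain.directedOn] at hxs
    obtain ⟨W, hWc, hxW⟩ := hxs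
    have hxb : x ∈ U ⊓ W := Submodule.mem_inf.mpr ⟨hxU, hxW⟩
    rwa [hcs hWc] at hxb
  obtain ⟨C, hVC, hCmem, hCmax⟩ :=
    zorn_le_nonempty₀ {W : Submodule R M | U ⊓ W = ⊥} hzorn V h
  exact ⟨C, hVC, hCmem, fun D hD hCD => le_antisymm (hCmax hD hCD) hCD⟩

lemma st18_compl_sup_ess {U C : Submodule R M} (h : U ⊓ C = ⊥)
    (hmax : ∀ D : Submodule R M, U ⊓ D = ⊥ → C ≤ D → D = C) :
    IsEssentialSubmodule (U ⊔ C) := by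
  intro X hX hbot
  apply hX
  have hUCX : U ⊓ (C ⊔ X) = ⊥ := by
    rw [eq_bot_iff]
    intro u hu
    obtain ⟨huU, huCX⟩ := Submodule.mem_inf.mp hu
    obtain ⟨cc, hcc, x, hx, hcx⟩ := Submodule.mem_sup.mp huCX
    have hxUC : x ∈ U ⊔ C := by
      have hxe : x = u - cc := by
        rw [← hcx]; abel
      rw [hxe]
      exact sub_mem (Submodule.mem_sup_left huU) (Submodule.mem_sup_right hcc)
    have hx0 : x = 0 := st18_inf_bot_eq hbot hxUC hx
    have hu0 : u = cc := by rw [← hcx, hx0, add_zero]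
    have : u = 0 := st18_inf_bot_eq h huU (hu0 ▸ hcc)
    simp [this]
  have hCX : C ⊔ X = C := hmax (C ⊔ X) hUCX le_sup_left
  have hXle : X ≤ U ⊔ C := le_trans (le_trans le_sup_right hCX.le) le_sup_right
  rw [← hbot]
  exact (inf_eq_right.mpr hXle).symm

lemma st18_ne_top_of_inf {X Y : Submodule R M} (h : X ⊓ Y = ⊥) (hY : Y ≠ ⊥) : X ≠ ⊤ := by
  rintro rfl
  rw [top_inf_eq] at h
  exact hY h

lemma st18_ne_of_inf {X Y : Submodule R M} (h : X ⊓ Y = ⊥) (hX : X ≠ ⊥) : X ≠ Y := by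
  intro he
  rw [he, inf_idem] at h
  exact hX (he.trans h)

lemma st18_ne_bot_of_le {X Y : Submodule R M} (h : X ≤ Y) (hX : X ≠ ⊥) : Y ≠ ⊥ :=
  fun hy => hX (le_bot_iff.mp (hy ▸ h))

lemma st18_atom (hT : ¬ ∃ A B C : Submodule R M, AdjS A B ∧ AdjS B C ∧ AdjS A C)
    {D C : Submodule R M} (hD : D ≠ ⊥) (hC : C ≠ ⊥) (hdc : D ⊓ C = ⊥) (htop : D ⊔ C = ⊤) :
    IsAtom D := by
  refine ⟨hD, fun W hW => ?_⟩
  by_contra hWne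
  have hWD : W ≤ D := hW.le
  have hWneD : W ≠ D := hW.ne
  have hWC : W ⊓ C = ⊥ := le_bot_iff.mp (hdc ▸ inf_le_inf_right C hWD)
  obtain ⟨C', hCC', hWC', hC'max⟩ := st18_exists_compl hWC
  have hXnetop : W ⊔ C ≠ ⊤ := by
    intro htp
    have hmod : (W ⊔ C) ⊓ D = W ⊔ C ⊓ D := sup_inf_assoc_of_le C hWD
    rw [htp, top_inf_eq, inf_comm, hdc, sup_bot_eq] at hmod
    exact hWneD hmod.symm
  have hXv : IsVertexS (W ⊔ C) := ⟨st18_ne_bot_of_le le_sup_right hC, hXnetop⟩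
  have hDv : IsVertexS D := ⟨st18_ne_bot_of_le hWD hWne, st18_ne_top_of_inf hdc hC⟩
  have hC'v : IsVertexS C' := by
    refine ⟨st18_ne_bot_of_le hCC' hC, st18_ne_top_of_inf (Y := W) ?_ hWne⟩
    rw [inf_comm]; exact hWC'
  have hXD : W ⊔ C ≠ D := by
    intro he
    have h1 : C ≤ D ⊓ C := le_inf (le_sup_right.trans he.le) le_rfl
    rw [hdc] at h1
    exact hC (le_bot_iff.mp h1)
  have hDC' : D ≠ C' := by
    intro he
    have h1 : W ≤ W ⊓ C' := le_inf le_rfl (hWD.trans he.le)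
    rw [hWC'] at h1
    exact hWne (le_bot_iff.mp h1)
  have hXC' : W ⊔ C ≠ C' := by
    intro he
    have h1 : W ≤ W ⊓ C' := le_inf le_rfl (le_sup_left.trans he.le)
    rw [hWC'] at h1
    exact hWne (le_bot_iff.mp h1)
  have hessXD : IsEssentialSubmodule ((W ⊔ C) ⊔ D) := by
    have heq : (W ⊔ C) ⊔ D = ⊤ := by
      rw [eq_top_iff, ← htop]
      exact sup_le le_sup_right (le_sup_right.trans le_sup_left)
    rw [heq]; exact st18_ess_top
  have hessDC' : IsEssentialSubmodule (D ⊔ C') := by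
    have heq : D ⊔ C' = ⊤ := by
      rw [eq_top_iff, ← htop]
      exact sup_le le_sup_left (hCC'.trans le_sup_right)
    rw [heq]; exact st18_ess_top
  have hessXC' : IsEssentialSubmodule ((W ⊔ C) ⊔ C') := by
    apply st18_ess_of_le (A := W ⊔ C')
    · exact sup_le (le_sup_left.trans le_sup_left) le_sup_right
    · exact st18_compl_sup_ess hWC' hC'max
  exact hT ⟨W ⊔ C, D, C', ⟨hXv, hDv, hXD, hessXD⟩, ⟨hDv, hC'v, hDC', hessDC'⟩,
    ⟨hXv, hC'v, hXC', hessXC'⟩⟩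

lemma st18_max_of_modular {D C : Submodule R M} (htop : D ⊔ C = ⊤) :
    ∀ W : Submodule R M, D ≤ W → W ⊓ C = ⊥ → W = D := by
  intro W hDW hWC
  have hmod : (D ⊔ C) ⊓ W = D ⊔ C ⊓ W := sup_inf_assoc_of_le C hDW
  rw [htop, top_inf_eq, inf_comm C W, hWC, sup_bot_eq] at hmod
  exact hmod

lemma st18_vertex_eq {D C : Submodule R M} (hD : IsAtom D) (hC : IsAtom C)
    (hdc : D ⊓ C = ⊥) (htop : D ⊔ C = ⊤) (hiso : IsEmpty (↥D ≃ₗ[R] ↥C)) :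
    ∀ N : Submodule R M, IsVertexS N → N = D ∨ N = C := by
  intro N hN
  by_contra hcon
  push_neg at hcon
  obtain ⟨hND', hNC'⟩ := hcon
  have hcd : C ⊓ D = ⊥ := by rw [inf_comm]; exact hdc
  have hct : C ⊔ D = ⊤ := by rw [sup_comm]; exact htop
  -- D is not below N
  have hDnleN : ¬ D ≤ N := by
    intro hDN
    have hmod : (D ⊔ C) ⊓ N = D ⊔ C ⊓ N := sup_inf_assoc_of_le C hDN
    rw [htop, top_inf_eq] at hmod
    rcases hC.le_iff.mp (inf_le_left : C ⊓ N ≤ C) with h | h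
    · rw [h, sup_bot_eq] at hmod
      exact hND' hmod
    · have hCN : C ≤ N := inf_eq_left.mp h
      exact hN.2 (le_antisymm le_top (by rw [← htop]; exact sup_le hDN hCN))
  have hCnleN : ¬ C ≤ N := by
    intro hCN
    have hmod : (C ⊔ D) ⊓ N = C ⊔ D ⊓ N := sup_inf_assoc_of_le D hCN
    rw [hct, top_inf_eq] at hmod
    rcases hD.le_iff.mp (inf_le_left : D ⊓ N ≤ D) with h | h
    · rw [h, sup_bot_eq] at hmod
      exact hNC' hmod
    · have hDN : D ≤ N := inf_eq_left.mp h
      exact hN.2 (le_antisymm le_top (by rw [← htop]; exact sup_le hDN hCN))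
  have hND : N ⊓ D = ⊥ := by
    rcases hD.le_iff.mp (inf_le_right : N ⊓ D ≤ D) with h | h
    · exact h
    · exact absurd (inf_eq_right.mp h) hDnleN
  have hNC : N ⊓ C = ⊥ := by
    rcases hC.le_iff.mp (inf_le_right : N ⊓ C ≤ C) with h | h
    · exact h
    · exact absurd (inf_eq_right.mp h) hCnleN
  have hNDtop : N ⊔ D = ⊤ := by
    rcases hC.le_iff.mp (inf_le_right : (N ⊔ D) ⊓ C ≤ C) with h | h
    · have h1 : N ⊔ D = D := st18_max_of_modular htop (N ⊔ D) le_sup_right h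
      have h2 : N ≤ D := le_sup_left.trans h1.le
      exact absurd (le_bot_iff.mp (by rw [← hND]; exact le_inf le_rfl h2)) hN.1
    · have hCle : C ≤ N ⊔ D := inf_eq_right.mp h
      exact le_antisymm le_top (by rw [← htop]; exact sup_le le_sup_right hCle)
  have hNCtop : N ⊔ C = ⊤ := by
    rcases hD.le_iff.mp (inf_le_right : (N ⊔ C) ⊓ D ≤ D) with h | h
    · have h1 : N ⊔ C = C := st18_max_of_modular hct (N ⊔ C) le_sup_right h
      have h2 : N ≤ C := le_sup_left.trans h1.le
      exact absurd (le_bot_iff.mp (by rw [← hNC]; exact le_inf le_rfl h2)) hN.1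
    · have hDle : D ≤ N ⊔ C := inf_eq_right.mp h
      exact le_antisymm le_top (by rw [← hct]; exact sup_le le_sup_right hDle)
  have hcplCN : IsCompl C N :=
    ⟨disjoint_iff.mpr (by rw [inf_comm]; exact hNC), codisjoint_iff.mpr (by rw [sup_comm]; exact hNCtop)⟩
  have hcplCD : IsCompl C D := ⟨disjoint_iff.mpr hcd, codisjoint_iff.mpr hct⟩
  have hcplDN : IsCompl D N :=
    ⟨disjoint_iff.mpr (by rw [inf_comm]; exact hND), codisjoint_iff.mpr (by rw [sup_comm]; exact hNDtop)⟩
  have hcplDC : IsCompl D C := ⟨disjoint_iff.mpr hdc, codisjoint_iff.mpr htop⟩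
  have e1 : ↥D ≃ₗ[R] ↥N :=
    (Submodule.quotientEquivOfIsCompl C D hcplCD).symm.trans (Submodule.quotientEquivOfIsCompl C N hcplCN)
  have e2 : ↥N ≃ₗ[R] ↥C :=
    (Submodule.quotientEquivOfIsCompl D N hcplDN).symm.trans (Submodule.quotientEquivOfIsCompl D C hcplDC)
  exact hiso.false (e1.trans e2)

lemma st18_no_triangle_of_two {P Q : Submodule R M}
    (h : ∀ N : Submodule R M, IsVertexS N → N = P ∨ N = Q) :
    ¬ ∃ A B C : Submodule R M, AdjS A B ∧ AdjS B C ∧ AdjS A C := by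
  rintro ⟨A, B, C, ⟨hA, hB, hAB, -⟩, ⟨-, hC, hBC, -⟩, ⟨-, -, hAC, -⟩⟩
  obtain hA' | hA' := h A hA <;> obtain hB' | hB' := h B hB <;> obtain hC' | hC' := h C hC <;>
    first
      | exact hAB (hA'.trans hB'.symm)
      | exact hBC (hB'.trans hC'.symm)
      | exact hAC (hA'.trans hC'.symm)

lemma st18_triangle_of_iso {D C : Submodule R M} (hD : D ≠ ⊥) (hC : C ≠ ⊥)
    (hdc : D ⊓ C = ⊥) (htop : D ⊔ C = ⊤) (f : ↥D ≃ₗ[R] ↥C) :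
    ∃ A B C' : Submodule R M, AdjS A B ∧ AdjS B C' ∧ AdjS A C' := by
  let g : ↥D →ₗ[R] M := D.subtype + C.subtype ∘ₗ (f : ↥D →ₗ[R] ↥C)
  have hg : ∀ d : ↥D, g d = (d : M) + ((f d : ↥C) : M) := fun d => rfl
  set X := LinearMap.range g with hX
  have hXD : X ⊓ D = ⊥ := by
    rw [eq_bot_iff]
    intro x hx
    obtain ⟨hxX, hxD⟩ := Submodule.mem_inf.mp hx
    obtain ⟨d, rfl⟩ := hxX
    have hfd : ((f d : ↥C) : M) ∈ D := by
      have : ((f d : ↥C) : M) = g d - (d : M) := by rw [hg]; abel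
      rw [this]
      exact sub_mem hxD d.2
    have h0 : ((f d : ↥C) : M) = 0 := st18_inf_bot_eq hdc hfd (f d).2
    have hd0 : d = 0 := by
      have : f d = 0 := Subtype.ext h0
      simpa using congrArg f.symm this
    simp [hg, hd0]
  have hXC : X ⊓ C = ⊥ := by
    rw [eq_bot_iff]
    intro x hx
    obtain ⟨hxX, hxC⟩ := Submodule.mem_inf.mp hx
    obtain ⟨d, rfl⟩ := hxX
    have hdm : (d : M) ∈ C := by
      have : (d : M) = g d - ((f d : ↥C) : M) := by rw [hg]; abel
      rw [this]
      exact sub_mem hxC (f d).2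
    have h0 : (d : M) = 0 := st18_inf_bot_eq hdc d.2 hdm
    have hd0 : d = 0 := Subtype.ext h0
    simp [hg, hd0]
  have hXDtop : X ⊔ D = ⊤ := by
    rw [eq_top_iff]
    intro m _
    have hm : m ∈ D ⊔ C := by rw [htop]; trivial
    obtain ⟨d, hd, c, hc, rfl⟩ := Submodule.mem_sup.mp hm
    obtain ⟨d', hd'⟩ := f.surjective ⟨c, hc⟩
    have hgd' : g d' ∈ X := ⟨d', rfl⟩
    have hsub : d - (d' : M) ∈ D := sub_mem hd d'.2
    have : d + c = g d' + (d - (d' : M)) := by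
      rw [hg, hd']; abel
    rw [this]
    exact add_mem (Submodule.mem_sup_left hgd') (Submodule.mem_sup_right hsub)
  have hXCtop : X ⊔ C = ⊤ := by
    rw [eq_top_iff]
    intro m _
    have hm : m ∈ D ⊔ C := by rw [htop]; trivial
    obtain ⟨d, hd, c, hc, rfl⟩ := Submodule.mem_sup.mp hm
    have hgd : g ⟨d, hd⟩ ∈ X := ⟨⟨d, hd⟩, rfl⟩
    have hsub : c - ((f ⟨d, hd⟩ : ↥C) : M) ∈ C := sub_mem hc (f ⟨d, hd⟩).2
    have : d + c = g ⟨d, hd⟩ + (c - ((f ⟨d, hd⟩ : ↥C) : M)) := by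
      rw [hg]; abel
    rw [this]
    exact add_mem (Submodule.mem_sup_left hgd) (Submodule.mem_sup_right hsub)
  have hXbot : X ≠ ⊥ := by
    obtain ⟨d, hd, hd0⟩ := (Submodule.ne_bot_iff D).mp hD
    rw [Submodule.ne_bot_iff]
    refine ⟨g ⟨d, hd⟩, ⟨⟨d, hd⟩, rfl⟩, ?_⟩
    intro h0
    have hsum : (d : M) + ((f ⟨d, hd⟩ : ↥C) : M) = 0 := by rw [← hg ⟨d, hd⟩]; exact h0
    have hdC : (d : M) ∈ C := by
      have he : (d : M) = -((f ⟨d, hd⟩ : ↥C) : M) := eq_neg_of_add_eq_zero_left hsum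
      rw [he]; exact neg_mem (f ⟨d, hd⟩).2
    exact hd0 (st18_inf_bot_eq hdc hd hdC)
  have hDC : D ≠ C := st18_ne_of_inf hdc hD
  have hXv : IsVertexS X := ⟨hXbot, st18_ne_top_of_inf hXD hD⟩
  have hDv : IsVertexS D := ⟨hD, st18_ne_top_of_inf hdc hC⟩
  have hCv : IsVertexS C := ⟨hC, st18_ne_top_of_inf (by rw [inf_comm]; exact hdc) hD⟩
  refine ⟨X, D, C, ⟨hXv, hDv, st18_ne_of_inf hXD hXbot, by rw [hXDtop]; exact st18_ess_top⟩,
    ⟨hDv, hCv, hDC, by rw [htop]; exact st18_ess_top⟩,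
    ⟨hXv, hCv, st18_ne_of_inf hXC hXbot, by rw [hXCtop]; exact st18_ess_top⟩⟩

/-- `S(M)` (with at least two vertices) is triangle-free iff `M` is a
direct sum of two non-isomorphic simple modules or a chain module with exactly two
nontrivial submodules; in either case `S(M)` is the complete graph on two vertices.
Consequently the girth of `S(M)` is `3` or `∞`. -/

theorem stmt18 (h2 : ∃ A B : Submodule R M, IsVertexS A ∧ IsVertexS B ∧ A ≠ B) :
    ((¬ ∃ A B C : Submodule R M, AdjS A B ∧ AdjS B C ∧ AdjS A C) ↔
        ((∃ S₁ S₂ : Submodule R M, IsAtom S₁ ∧ IsAtom S₂ ∧ S₁ ⊓ S₂ = ⊥ ∧ S₁ ⊔ S₂ = ⊤ ∧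
            IsEmpty (↥S₁ ≃ₗ[R] ↥S₂)) ∨
          ((∀ A B : Submodule R M, A ≤ B ∨ B ≤ A) ∧
            ∃ A B : Submodule R M, IsVertexS A ∧ IsVertexS B ∧ A ≠ B ∧
              ∀ N : Submodule R M, IsVertexS N → N = A ∨ N = B))) ∧
    ((¬ ∃ A B C : Submodule R M, AdjS A B ∧ AdjS B C ∧ AdjS A C) →
        ∃ A B : Submodule R M, AdjS A B ∧
          ∀ N : Submodule R M, IsVertexS N → N = A ∨ N = B) ∧
    ((sumEssentialGraph R M).egirth = 3 ∨ (sumEssentialGraph R M).egirth = ⊤) := by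
  classical
  have key : (¬ ∃ A B C : Submodule R M, AdjS A B ∧ AdjS B C ∧ AdjS A C) →
      ((∃ S₁ S₂ : Submodule R M, IsAtom S₁ ∧ IsAtom S₂ ∧ S₁ ⊓ S₂ = ⊥ ∧ S₁ ⊔ S₂ = ⊤ ∧
            IsEmpty (↥S₁ ≃ₗ[R] ↥S₂)) ∨
          ((∀ A B : Submodule R M, A ≤ B ∨ B ≤ A) ∧
            ∃ A B : Submodule R M, IsVertexS A ∧ IsVertexS B ∧ A ≠ B ∧
              ∀ N : Submodule R M, IsVertexS N → N = A ∨ N = B)) ∧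
        (∃ A B : Submodule R M, AdjS A B ∧
          ∀ N : Submodule R M, IsVertexS N → N = A ∨ N = B) := by
    intro hT
    by_cases huni : ∀ A B : Submodule R M, A ≠ ⊥ → B ≠ ⊥ → A ⊓ B ≠ ⊥
    · obtain ⟨A, B, hA, hB, hAB⟩ := h2
      have hess : ∀ P : Submodule R M, P ≠ ⊥ → IsEssentialSubmodule P :=
        fun P hP X hX => huni P X hP hX
      have hvert : ∀ N : Submodule R M, IsVertexS N → N = A ∨ N = B := by
        intro N hN
        by_contra hcon
        push_neg at hcon
        obtain ⟨hNA, hNB⟩ := hcon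
        exact hT ⟨N, A, B,
          ⟨hN, hA, hNA, hess _ (st18_ne_bot_of_le le_sup_left hN.1)⟩,
          ⟨hA, hB, hAB, hess _ (st18_ne_bot_of_le le_sup_left hA.1)⟩,
          ⟨hN, hB, hNB, hess _ (st18_ne_bot_of_le le_sup_left hN.1)⟩⟩
      have hadj : AdjS A B := ⟨hA, hB, hAB, hess _ (st18_ne_bot_of_le le_sup_left hA.1)⟩
      refine ⟨Or.inr ⟨?_, A, B, hA, hB, hAB, hvert⟩, A, B, hadj, hvert⟩
      have hABv : IsVertexS (A ⊓ B) := by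
        refine ⟨huni A B hA.1 hB.1, ?_⟩
        intro h
        exact hA.2 (top_unique (by rw [← h]; exact inf_le_left))
      have hcomp : A ≤ B ∨ B ≤ A := by
        rcases hvert _ hABv with h | h
        · exact Or.inl (inf_eq_left.mp h)
        · exact Or.inr (inf_eq_right.mp h)
      have hmem : ∀ P : Submodule R M, P = ⊥ ∨ P = ⊤ ∨ P = A ∨ P = B := by
        intro P
        by_cases h1 : P = ⊥
        · exact Or.inl h1
        by_cases h2' : P = ⊤
        · exact Or.inr (Or.inl h2')
        rcases hvert P ⟨h1, h2'⟩ with h | h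
        · exact Or.inr (Or.inr (Or.inl h))
        · exact Or.inr (Or.inr (Or.inr h))
      intro P Q
      rcases hmem P with rfl | rfl | rfl | rfl <;> rcases hmem Q with rfl | rfl | rfl | rfl <;>
        first
          | exact Or.inl bot_le
          | exact Or.inl le_top
          | exact Or.inr bot_le
          | exact Or.inr le_top
          | exact Or.inl le_rfl
          | exact hcomp
          | exact hcomp.symm
    · push_neg at huni
      obtain ⟨U, V, hU, hV, hUV⟩ := huni
      obtain ⟨C, hVC, hUC, hCmax⟩ := st18_exists_compl hUV
      have hCU : C ⊓ U = ⊥ := by rw [inf_comm]; exact hUC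
      obtain ⟨D, hUD, hCD, hDmax⟩ := st18_exists_compl hCU
      have hCne : C ≠ ⊥ := st18_ne_bot_of_le hVC hV
      have hDne : D ≠ ⊥ := st18_ne_bot_of_le hUD hU
      have hdc : D ⊓ C = ⊥ := by rw [inf_comm]; exact hCD
      have hessCD : IsEssentialSubmodule (C ⊔ D) := st18_compl_sup_ess hCD hDmax
      have hDv : IsVertexS D := ⟨hDne, st18_ne_top_of_inf hdc hCne⟩
      have hCv : IsVertexS C := ⟨hCne, st18_ne_top_of_inf hCD hDne⟩
      have hDCne : D ≠ C := st18_ne_of_inf hdc hDne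
      have htop : D ⊔ C = ⊤ := by
        by_contra hne
        have hEv : IsVertexS (D ⊔ C) := ⟨st18_ne_bot_of_le le_sup_left hDne, hne⟩
        have hessDC : IsEssentialSubmodule (D ⊔ C) := by rw [sup_comm]; exact hessCD
        refine hT ⟨D, C, D ⊔ C, ⟨hDv, hCv, hDCne, hessDC⟩,
          ⟨hCv, hEv, ?_, st18_ess_of_le le_sup_right hessDC⟩,
          ⟨hDv, hEv, ?_, st18_ess_of_le le_sup_right hessDC⟩⟩
        · intro he
          have h1 : D ≤ C := le_sup_left.trans he.ge
          exact hDne (le_bot_iff.mp (by rw [← hdc]; exact le_inf le_rfl h1))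
        · intro he
          have h1 : C ≤ D := le_sup_right.trans he.ge
          exact hCne (le_bot_iff.mp (by rw [← hdc]; exact le_inf h1 le_rfl))
      have hatomD : IsAtom D := st18_atom hT hDne hCne hdc htop
      have hatomC : IsAtom C := st18_atom hT hCne hDne hCD (by rw [sup_comm]; exact htop)
      have hiso : IsEmpty (↥D ≃ₗ[R] ↥C) :=
        ⟨fun f => hT (st18_triangle_of_iso hDne hCne hdc htop f)⟩
      have hvert := st18_vertex_eq hatomD hatomC hdc htop hiso
      have hadj : AdjS D C := ⟨hDv, hCv, hDCne, by rw [htop]; exact st18_ess_top⟩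
      exact ⟨Or.inl ⟨D, C, hatomD, hatomC, hdc, htop, hiso⟩, D, C, hadj, hvert⟩
  have back : ((∃ S₁ S₂ : Submodule R M, IsAtom S₁ ∧ IsAtom S₂ ∧ S₁ ⊓ S₂ = ⊥ ∧ S₁ ⊔ S₂ = ⊤ ∧
            IsEmpty (↥S₁ ≃ₗ[R] ↥S₂)) ∨
          ((∀ A B : Submodule R M, A ≤ B ∨ B ≤ A) ∧
            ∃ A B : Submodule R M, IsVertexS A ∧ IsVertexS B ∧ A ≠ B ∧
              ∀ N : Submodule R M, IsVertexS N → N = A ∨ N = B)) →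
      ¬ ∃ A B C : Submodule R M, AdjS A B ∧ AdjS B C ∧ AdjS A C := by
    rintro (⟨S₁, S₂, h1, h2', hd, ht, hiso⟩ | ⟨-, A, B, hA, hB, hAB, hv⟩)
    · exact st18_no_triangle_of_two (st18_vertex_eq h1 h2' hd ht hiso)
    · exact st18_no_triangle_of_two hv
  refine ⟨⟨fun h => (key h).1, back⟩, fun h => (key h).2, ?_⟩
  by_cases hT : ∃ A B C : Submodule R M, AdjS A B ∧ AdjS B C ∧ AdjS A C
  · left
    obtain ⟨A, B, C, ⟨hA, hB, hAB, e1⟩, ⟨-, hC, hBC, e2⟩, ⟨-, -, hAC, e3⟩⟩ := hT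
    let a : {N : Submodule R M // N ≠ ⊥ ∧ N ≠ ⊤} := ⟨A, hA⟩
    let b : {N : Submodule R M // N ≠ ⊥ ∧ N ≠ ⊤} := ⟨B, hB⟩
    let c : {N : Submodule R M // N ≠ ⊥ ∧ N ≠ ⊤} := ⟨C, hC⟩
    have nab : a ≠ b := fun h => hAB (congrArg Subtype.val h)
    have nbc : b ≠ c := fun h => hBC (congrArg Subtype.val h)
    have nac : a ≠ c := fun h => hAC (congrArg Subtype.val h)
    have hab : (sumEssentialGraph R M).Adj a b := ⟨nab, e1⟩
    have hbc : (sumEssentialGraph R M).Adj b c := ⟨nbc, e2⟩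
    have hca : (sumEssentialGraph R M).Adj c a := (sumEssentialGraph R M).adj_symm ⟨nac, e3⟩
    let w : (sumEssentialGraph R M).Walk a a :=
      SimpleGraph.Walk.cons hab (SimpleGraph.Walk.cons hbc
        (SimpleGraph.Walk.cons hca SimpleGraph.Walk.nil))
    have hcyc : w.IsCycle := by
      rw [SimpleGraph.Walk.cons_isCycle_iff]
      constructor
      · simp [SimpleGraph.Walk.isPath_def, nab, nbc, nac, nab.symm, nbc.symm, nac.symm]
      · simp [Sym2.eq_iff, nab, nbc, nac, nab.symm, nbc.symm, nac.symm]
    have hle : (sumEssentialGraph R M).egirth ≤ (w.length : ℕ∞) := by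
      unfold SimpleGraph.egirth
      exact iInf_le_of_le a (iInf_le_of_le w (iInf_le _ hcyc))
    have hlen : w.length = 3 := rfl
    rw [hlen] at hle
    exact le_antisymm (by exact_mod_cast hle) SimpleGraph.three_le_egirth
  · right
    rw [SimpleGraph.egirth_eq_top]
    obtain ⟨A, B, hadj, hv⟩ := (key hT).2
    intro v c hc
    have h3 := hc.three_le_length
    have hnd : c.support.tail.Nodup := hc.support_nodup
    have hlt : c.support.tail.length = c.length := by
      rw [List.length_tail, SimpleGraph.Walk.length_support]
      omega
    obtain ⟨x, y, z, rest, hrep⟩ :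
        ∃ x y z rest, c.support.tail = x :: y :: z :: rest := by
      rcases hls : c.support.tail with - | ⟨x, - | ⟨y, - | ⟨z, rest⟩⟩⟩
      · rw [hls] at hlt; simp at hlt; omega
      · rw [hls] at hlt; simp at hlt; omega
      · rw [hls] at hlt; simp at hlt; omega
      · exact ⟨x, y, z, rest, rfl⟩
    rw [hrep, List.nodup_cons, List.nodup_cons] at hnd
    obtain ⟨hx1, hy1, -⟩ := hnd
    have nxy : x ≠ y := fun h => hx1 (h ▸ List.mem_cons_self)
    have nxz : x ≠ z := fun h =>
      hx1 (by rw [h]; exact List.mem_cons_of_mem _ (List.mem_cons_self))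
    have nyz : y ≠ z := fun h => hy1 (h ▸ List.mem_cons_self)
    obtain hx' | hx' := hv x.1 x.2 <;> obtain hy' | hy' := hv y.1 y.2 <;>
      obtain hz' | hz' := hv z.1 z.2 <;>
      first
        | exact nxy (Subtype.ext (hx'.trans hy'.symm))
        | exact nxz (Subtype.ext (hx'.trans hz'.symm))
        | exact nyz (Subtype.ext (hy'.trans hz'.symm))
end
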